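/- In the current-algebra setup with g = Matrix (Fin l) ℂ, the Lie algebra of l×l complex matrices under the commutator bracket (l ≥ 1), let γ be a normalized 2-cocycle on D. Then for every matrix x and every a ∈ 𝒜, γ(e, j x a) = (trace(x)/l)·γ(e, j 1ₗ a), where 1ₗ is the identity matrix. In particular, γ(e, j x a) depends on x only through its trace. -/

import Mathlib

/-- The cocycle identity underlying Lemma 4.3 of the paper: for
`g = 𝔤𝔩(l) = Matrix (Fin l) (Fin l) ℂ` and a normalized 2-cocycle `γ` on `D`,
`γ(e, j x a) = (tr x / l) · γ(e, j 1ₗ a)`. -/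
theorem cocycle_on_gl_currents
    (l : ℕ) (hl : 1 ≤ l)
    (D : Type*) [LieRing D] [LieAlgebra ℂ D]
    (A : Type*) [CommRing A] [Algebra ℂ A]
    (j : Matrix (Fin l) (Fin l) ℂ →ₗ[ℂ] A →ₗ[ℂ] D)
    (hj : ∀ (x y : Matrix (Fin l) (Fin l) ℂ) (a b : A),
      ⁅j x a, j y b⁆ = j ⁅x, y⁆ (a * b))
    (e : D) (δ : A →ₗ[ℂ] A) (hδ : δ 1 = 0)
    (he : ∀ (x : Matrix (Fin l) (Fin l) ℂ) (a : A), ⁅e, j x a⁆ = j x (δ a))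
    (γ : D →ₗ[ℂ] D →ₗ[ℂ] ℂ)
    (hγ_alt : ∀ u : D, γ u u = 0)
    (hγ_coc : ∀ u v w : D, γ ⁅u, v⁆ w + γ ⁅v, w⁆ u + γ ⁅w, u⁆ v = 0)
    (hγ_norm : ∀ (x y : Matrix (Fin l) (Fin l) ℂ) (b : A), γ (j x 1) (j y b) = 0) :
    ∀ (x : Matrix (Fin l) (Fin l) ℂ) (a : A),
      γ e (j x a) = (Matrix.trace x / (l : ℂ)) * γ e (j 1 a) := by
  intro x a
  have hlpos : (0 : ℕ) < l := hl
  haveI : NeZero l := ⟨by omega⟩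
  -- skew-symmetry of γ
  have hskew : ∀ u v : D, γ u v = - γ v u := by
    intro u v
    have h := hγ_alt (u + v)
    simp only [map_add, LinearMap.add_apply, hγ_alt] at h
    linear_combination h
  -- the linear functional x ↦ γ e (j x a)
  set f : Matrix (Fin l) (Fin l) ℂ →ₗ[ℂ] ℂ := (γ e).comp (j.flip a) with hf
  have hfapp : ∀ y : Matrix (Fin l) (Fin l) ℂ, f y = γ e (j y a) := fun y => rfl
  -- f vanishes on commutators
  have hcomm : ∀ u v : Matrix (Fin l) (Fin l) ℂ, f ⁅u, v⁆ = 0 := by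
    intro u v
    have h0 : (⁅e, j u (1 : A)⁆ : D) = 0 := by rw [he, hδ, map_zero]
    have h := hγ_coc e (j u 1) (j v a)
    rw [h0] at h
    have h1 : (⁅j u (1 : A), j v a⁆ : D) = j ⁅u, v⁆ a := by rw [hj, one_mul]
    rw [h1] at h
    have h2 : (⁅j v a, e⁆ : D) = -(j v (δ a)) := by
      rw [← lie_skew, he]
    rw [h2] at h
    have h3 : γ (j v (δ a)) (j u 1) = 0 := by
      rw [hskew, hγ_norm, neg_zero]
    simp only [map_zero, LinearMap.zero_apply, map_neg, LinearMap.neg_apply, h3] at h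
    have h4 : γ (j ⁅u, v⁆ a) e = 0 := by linear_combination h
    rw [hfapp, hskew, h4, neg_zero]
  -- values on standard basis matrices
  set E : Fin l → Fin l → Matrix (Fin l) (Fin l) ℂ :=
    fun p q => Matrix.single p q 1 with hE
  have hoff : ∀ p q : Fin l, p ≠ q → f (E p q) = 0 := by
    intro p q hpq
    have hqp : q ≠ p := Ne.symm hpq
    have : E p q = ⁅E p p, E p q⁆ := by
      simp [hE, Ring.lie_def, hqp]
    rw [this, hcomm]
  have i0 : Fin l := ⟨0, hlpos⟩
  set c : ℂ := f (E i0 i0) with hc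
  have hdiag : ∀ p : Fin l, f (E p p) = c := by
    intro p
    by_cases hp : p = i0
    · rw [hp]
    · have key : E p p - E i0 i0 = ⁅E p i0, E i0 p⁆ := by
        simp [hE, Ring.lie_def]
      have h := hcomm (E p i0) (E i0 p)
      rw [← key, map_sub] at h
      have h2 : f (E p p) = f (E i0 i0) := by linear_combination h
      rw [h2]
  -- compute f on any matrix
  have hx : ∀ y : Matrix (Fin l) (Fin l) ℂ, f y = Matrix.trace y * c := by
    intro y
    have hsingle : ∀ p q : Fin l,
        f (Matrix.single p q (y p q)) = if q = p then y p p * c else 0 := by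
      intro p q
      have hsm : Matrix.single p q (y p q) = y p q • E p q := by
        rw [hE]
        rw [Matrix.smul_single, smul_eq_mul, mul_one]
      rw [hsm, map_smul, smul_eq_mul]
      by_cases hq : q = p
      · subst hq; rw [hdiag, if_pos rfl]
      · rw [hoff p q (Ne.symm hq), if_neg hq, mul_zero]
    conv_lhs => rw [Matrix.matrix_eq_sum_single y]
    rw [map_sum]
    simp only [map_sum, hsingle, Finset.sum_ite_eq', Finset.mem_univ, if_true]
    rw [Matrix.trace, ← Finset.sum_mul]
    rfl
  have hlne : (l : ℂ) ≠ 0 := Nat.cast_ne_zero.mpr (by omega)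
  have hfin : f x = Matrix.trace x / (l : ℂ) * f 1 := by
    rw [hx, hx, Matrix.trace_one]
    simp only [Fintype.card_fin]
    field_simp
  rw [← hfapp, ← hfapp, hfin]
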